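/- Let P be a non-trivial product distribution on {0,1}^n (independent coordinates with 0 < p_j = Pr[z_j = 1] < 1 for all j), and let ℓ ∈ {0,1,...,n-1}. Then there exists a probability distribution on pairs (c_ℓ, c_{ℓ+1}), where c_ℓ is a subset of [n] of size ℓ and c_{ℓ+1} is a subset of [n] of size ℓ+1, such that: (1) c_ℓ ⊂ c_{ℓ+1} with probability 1; (2) c_ℓ is distributed according to P_ℓ; (3) c_{ℓ+1} is distributed according to P_{ℓ+1}. -/

import Mathlib

open Finset

/-- The probability that a sample from the product distribution on `{0,1}^n`
with parameters `p` equals the indicator vector of the set `s ⊆ [n]`. -/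
def prodWeight {n : ℕ} (p : Fin n → ℝ) (s : Finset (Fin n)) : ℝ :=
  (∏ j ∈ s, p j) * ∏ j ∈ sᶜ, (1 - p j)

/-- The conditioned measure `P_ℓ`: the probability, under the product distribution
with parameters `p` conditioned on `|z| = ℓ`, of the set `s` (it is `0` unless
`|s| = ℓ`). -/
noncomputable def condWeight {n : ℕ} (p : Fin n → ℝ) (ℓ : ℕ) (s : Finset (Fin n)) : ℝ :=
  (if s.card = ℓ then prodWeight p s else 0) /
    ∑ u ∈ Finset.univ.filter (fun u : Finset (Fin n) => u.card = ℓ), prodWeight p u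

namespace CouplingAux
variable {n : ℕ}

noncomputable def E (w : Fin n → ℝ) (A : Finset (Fin n)) (k : ℕ) : ℝ :=
  ∑ s ∈ A.powersetCard k, ∏ j ∈ s, w j

noncomputable def Wf (w : Fin n → ℝ) (A : Finset (Fin n)) (k : ℕ) (s : Finset (Fin n)) : ℝ :=
  if s.card = k ∧ s ⊆ A then ∏ j ∈ s, w j else 0

lemma sum_Wf (w : Fin n → ℝ) (A : Finset (Fin n)) (k : ℕ) :
    ∑ s : Finset (Fin n), Wf w A k s = E w A k := by
  rw [E]
  unfold Wf
  rw [← Finset.sum_filter]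
  congr 1
  ext s
  simp [mem_powersetCard, and_comm]

lemma E_zero (w : Fin n → ℝ) (A : Finset (Fin n)) : E w A 0 = 1 := by
  simp [E, powersetCard_zero]

lemma Wf_nonneg {w : Fin n → ℝ} (hw : ∀ j, 0 < w j) (A : Finset (Fin n)) (k : ℕ)
    (s : Finset (Fin n)) : 0 ≤ Wf w A k s := by
  unfold Wf; split
  · exact Finset.prod_nonneg fun j _ => (hw j).le
  · exact le_refl 0

lemma E_pos {w : Fin n → ℝ} (hw : ∀ j, 0 < w j) {A : Finset (Fin n)} {k : ℕ}
    (h : k ≤ A.card) : 0 < E w A k := by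
  apply Finset.sum_pos
  · intro s _
    exact Finset.prod_pos fun j _ => hw j
  · exact powersetCard_nonempty.2 h

lemma E_nonneg {w : Fin n → ℝ} (hw : ∀ j, 0 < w j) (A : Finset (Fin n)) (k : ℕ) :
    0 ≤ E w A k :=
  Finset.sum_nonneg fun s _ => Finset.prod_nonneg fun j _ => (hw j).le

lemma E_eq_zero {w : Fin n → ℝ} {A : Finset (Fin n)} {k : ℕ} (h : A.card < k) :
    E w A k = 0 := by
  rw [E, powersetCard_eq_empty.2 h, Finset.sum_empty]

lemma E_insert {w : Fin n → ℝ} {A : Finset (Fin n)} {a : Fin n} (ha : a ∉ A) (k : ℕ) :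
    E w (insert a A) (k + 1) = E w A (k + 1) + w a * E w A k := by
  rw [E, powersetCard_succ_insert ha, Finset.sum_union, Finset.sum_image]
  · rw [E, E, Finset.mul_sum]
    congr 1
    apply Finset.sum_congr rfl
    intro s hs
    have hs' : a ∉ s := fun h => ha ((mem_powersetCard.1 hs).1 h)
    rw [Finset.prod_insert hs']
  · intro s hs t ht hst
    have hs' : a ∉ s := fun h => ha ((mem_powersetCard.1 hs).1 h)
    have ht' : a ∉ t := fun h => ha ((mem_powersetCard.1 ht).1 h)
    have := congrArg (Finset.erase · a) hst
    simpa [Finset.erase_insert hs', Finset.erase_insert ht'] using this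
  · rw [Finset.disjoint_left]
    intro s hs hs2
    obtain ⟨t, ht, rfl⟩ := Finset.mem_image.1 hs2
    have : a ∉ t := fun h => ha ((mem_powersetCard.1 ht).1 h)
    exact ha ((mem_powersetCard.1 hs).1 (mem_insert_self a t))

lemma E_cross {w : Fin n → ℝ} (hw : ∀ j, 0 < w j) (A : Finset (Fin n)) (k : ℕ)
    (h1 : E w A k * E w A (k + 2) ≤ E w A (k + 1) ^ 2)
    (h2 : E w A (k + 1) * E w A (k + 3) ≤ E w A (k + 2) ^ 2) :
    E w A k * E w A (k + 3) ≤ E w A (k + 1) * E w A (k + 2) := by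
  by_cases hc : A.card < k + 2
  · have h3 : E w A (k + 3) = 0 := E_eq_zero (by omega)
    rw [h3, mul_zero]
    exact mul_nonneg (E_nonneg hw _ _) (E_nonneg hw _ _)
  · have hb1 : 0 < E w A (k + 1) := E_pos hw (by omega)
    have hb2 : 0 < E w A (k + 2) := E_pos hw (by omega)
    have key := mul_le_mul h1 h2
      (mul_nonneg hb1.le (E_nonneg hw _ _)) (sq_nonneg _)
    nlinarith [mul_pos hb1 hb2]

lemma E_logc {w : Fin n → ℝ} (hw : ∀ j, 0 < w j) (A : Finset (Fin n)) :
    ∀ k : ℕ, E w A k * E w A (k + 2) ≤ E w A (k + 1) ^ 2 := by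
  induction A using Finset.induction with
  | empty =>
    intro k
    rw [E_eq_zero (by simp : (∅ : Finset (Fin n)).card < k + 2), mul_zero]
    exact sq_nonneg _
  | @insert a A ha IH =>
    intro k
    match k with
    | 0 =>
      rw [E_zero, one_mul]
      rw [E_insert ha 1, E_insert ha 0, E_zero]
      have h0 := IH 0
      rw [E_zero, one_mul] at h0
      nlinarith [hw a, E_nonneg hw A 1, E_nonneg hw A 2]
    | (k + 1) =>
      rw [E_insert ha k, E_insert ha (k + 1), E_insert ha (k + 2)]
      have h1 := IH k
      have h2 := IH (k + 1)
      have h3 := E_cross hw A k h1 h2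
      nlinarith [hw a, E_nonneg hw A k, E_nonneg hw A (k + 1), E_nonneg hw A (k + 2),
        E_nonneg hw A (k + 3), sq_nonneg (w a)]

/-- toggle membership of `a` -/
def toggle (a : Fin n) : Finset (Fin n) ≃ Finset (Fin n) where
  toFun s := if a ∈ s then s.erase a else insert a s
  invFun s := if a ∈ s then s.erase a else insert a s
  left_inv s := by
    by_cases h : a ∈ s
    · simp [h, notMem_erase, Finset.insert_erase h]
    · simp [h, Finset.erase_insert h]
  right_inv s := by
    by_cases h : a ∈ s
    · simp [h, notMem_erase, Finset.insert_erase h]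
    · simp [h, Finset.erase_insert h]

lemma sum_ite_erase (a : Fin n) (g : Finset (Fin n) → ℝ) (hg : ∀ t, a ∈ t → g t = 0) :
    ∑ s : Finset (Fin n), (if a ∈ s then g (s.erase a) else 0) = ∑ t : Finset (Fin n), g t :=
  (Fintype.sum_equiv (toggle a) g (fun s => if a ∈ s then g (s.erase a) else 0)
    (fun t => by
      by_cases h : a ∈ t
      · simp [toggle, h, notMem_erase, hg t h]
      · simp [toggle, h, Finset.erase_insert h])).symm

lemma Wf_insert_mem {w : Fin n → ℝ} {A : Finset (Fin n)} {a : Fin n} (ha : a ∉ A)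
    {s : Finset (Fin n)} (has : a ∈ s) (k : ℕ) :
    Wf w (insert a A) (k + 1) s = w a * Wf w A k (s.erase a) := by
  unfold Wf
  by_cases h : s.card = k + 1 ∧ s ⊆ insert a A
  · have hc : (s.erase a).card = k := by
      rw [Finset.card_erase_of_mem has, h.1]
      simp
    have hsub : s.erase a ⊆ A := by
      intro x hx
      have hxs := Finset.mem_of_mem_erase hx
      have hxa := Finset.ne_of_mem_erase hx
      rcases Finset.mem_insert.1 (h.2 hxs) with h' | h'
      · exact absurd h' hxa
      · exact h'
    rw [if_pos h, if_pos ⟨hc, hsub⟩, ← Finset.mul_prod_erase s w has]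
  · rw [if_neg h]
    by_cases h2 : (s.erase a).card = k ∧ s.erase a ⊆ A
    · exfalso
      apply h
      constructor
      · rw [← Finset.insert_erase has, Finset.card_insert_of_notMem (notMem_erase a s), h2.1]
      · intro x hx
        by_cases hxa : x = a
        · exact Finset.mem_insert.2 (Or.inl hxa)
        · exact Finset.mem_insert.2 (Or.inr (h2.2 (Finset.mem_erase.2 ⟨hxa, hx⟩)))
    · rw [if_neg h2, mul_zero]

lemma Wf_insert_not_mem {w : Fin n → ℝ} {A : Finset (Fin n)} {a : Fin n}
    {s : Finset (Fin n)} (has : a ∉ s) (k : ℕ) :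
    Wf w (insert a A) k s = Wf w A k s := by
  unfold Wf
  simp only [Finset.subset_insert_iff_of_notMem has]

lemma Wf_eq_zero_of_card_lt {w : Fin n → ℝ} {A : Finset (Fin n)} {k : ℕ}
    (h : A.card < k) (s : Finset (Fin n)) : Wf w A k s = 0 := by
  unfold Wf
  rw [if_neg]
  rintro ⟨h1, h2⟩
  exact absurd (Finset.card_le_card h2) (by omega)

lemma cond_iff {a : Fin n} {s s' : Finset (Fin n)} (has' : a ∈ s') :
    (a ∉ s ∧ s' = insert a s) ↔ s = s'.erase a := by
  constructor
  · rintro ⟨h1, rfl⟩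
    rw [Finset.erase_insert h1]
  · rintro rfl
    exact ⟨notMem_erase a s', (Finset.insert_erase has').symm⟩

lemma exists_coupling_zero {w : Fin n → ℝ} (hw : ∀ j, 0 < w j) (A : Finset (Fin n))
    (hA : 0 < A.card) :
    ∃ μ : Finset (Fin n) × Finset (Fin n) → ℝ,
      (∀ c, 0 ≤ μ c) ∧
      (∀ c, μ c ≠ 0 → c.1 ⊂ c.2 ∧ c.1.card = 0 ∧ c.2.card = 0 + 1 ∧ c.2 ⊆ A) ∧
      (∀ s, ∑ s' : Finset (Fin n), μ (s, s') = Wf w A 0 s / E w A 0) ∧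
      (∀ s', ∑ s : Finset (Fin n), μ (s, s') = Wf w A (0 + 1) s' / E w A (0 + 1)) := by
  refine ⟨fun c => if c.1 = ∅ then Wf w A 1 c.2 / E w A 1 else 0, ?_, ?_, ?_, ?_⟩
  · intro c
    simp only
    split
    · exact div_nonneg (Wf_nonneg hw _ _ _) (E_nonneg hw _ _)
    · exact le_refl 0
  · rintro ⟨s, s'⟩ hμ
    simp only at hμ
    split at hμ
    · next h1 =>
      have hW : Wf w A 1 s' ≠ 0 := fun h => hμ (by rw [h, zero_div])
      have h2 : s'.card = 1 ∧ s' ⊆ A := by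
        by_contra hc
        exact hW (if_neg hc)
      refine ⟨?_, by simp [h1], by simpa using h2.1, h2.2⟩
      rw [h1]
      exact Finset.empty_ssubset.2 (Finset.card_pos.1 (by rw [h2.1]; norm_num))
    · exact absurd rfl hμ
  · intro s
    by_cases hs : s = ∅
    · simp only [hs, if_true]
      rw [← Finset.sum_div, sum_Wf]
      rw [div_self (ne_of_gt (E_pos hw hA))]
      have : Wf w A 0 (∅ : Finset (Fin n)) = 1 := by
        unfold Wf
        rw [if_pos ⟨Finset.card_empty, Finset.empty_subset A⟩, Finset.prod_empty]
      rw [this, E_zero, div_one]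
    · simp only [hs, if_false]
      rw [Finset.sum_const_zero]
      have : Wf w A 0 s = 0 := by
        unfold Wf
        rw [if_neg]
        rintro ⟨h1, _⟩
        exact hs (Finset.card_eq_zero.1 h1)
      rw [this, zero_div]
  · intro s'
    rw [Finset.sum_ite_eq' Finset.univ (∅ : Finset (Fin n))
      (fun _ => Wf w A 1 s' / E w A 1)]
    simp

lemma Wf_ne_zero {w : Fin n → ℝ} {A : Finset (Fin n)} {k : ℕ} {s : Finset (Fin n)}
    (h : Wf w A k s ≠ 0) : s.card = k ∧ s ⊆ A := by
  by_contra hc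
  exact h (if_neg hc)

lemma exists_coupling {w : Fin n → ℝ} (hw : ∀ j, 0 < w j) (A : Finset (Fin n)) :
    ∀ k : ℕ, k < A.card →
    ∃ μ : Finset (Fin n) × Finset (Fin n) → ℝ,
      (∀ c, 0 ≤ μ c) ∧
      (∀ c, μ c ≠ 0 → c.1 ⊂ c.2 ∧ c.1.card = k ∧ c.2.card = k + 1 ∧ c.2 ⊆ A) ∧
      (∀ s, ∑ s' : Finset (Fin n), μ (s, s') = Wf w A k s / E w A k) ∧
      (∀ s', ∑ s : Finset (Fin n), μ (s, s') = Wf w A (k + 1) s' / E w A (k + 1)) := by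
  induction A using Finset.induction with
  | empty => intro k hk; simp at hk
  | @insert a A ha IH =>
    intro k hk
    have hcard : (insert a A).card = A.card + 1 := Finset.card_insert_of_notMem ha
    match k with
    | 0 => exact exists_coupling_zero hw _ (by omega)
    | (k0 + 1) =>
      rw [hcard] at hk
      have hk0 : k0 < A.card := by omega
      have hk1 : k0 + 1 ≤ A.card := hk0
      obtain ⟨μ₁, hμ₁nn, hμ₁sup, hμ₁row, hμ₁col⟩ := IH k0 hk0
      set b0 := E w A k0 with hb0def
      set b1 := E w A (k0 + 1) with hb1def
      set b2 := E w A (k0 + 2) with hb2def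
      set B1 := E w (insert a A) (k0 + 1) with hB1def
      set B2 := E w (insert a A) (k0 + 2) with hB2def
      have hb0 : 0 < b0 := E_pos hw hk0.le
      have hb1 : 0 < b1 := E_pos hw hk1
      have hb2nn : 0 ≤ b2 := E_nonneg hw _ _
      have hB1e : B1 = b1 + w a * b0 := E_insert ha k0
      have hB2e : B2 = b2 + w a * b1 := E_insert ha (k0 + 1)
      have hwa : 0 < w a := hw a
      have hB1 : 0 < B1 := by nlinarith
      have hB2 : 0 < B2 := by nlinarith
      set q := w a * b0 / B1 with hqdef
      set q' := w a * b1 / B2 with hq'def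
      have hq0 : 0 ≤ q := div_nonneg (by positivity) hB1.le
      have hlog : b0 * b2 ≤ b1 ^ 2 := E_logc hw A k0
      have hqq' : q ≤ q' := by
        rw [hqdef, hq'def, div_le_div_iff₀ hB1 hB2, hB1e, hB2e]
        nlinarith
      have h1q : 1 - q = b1 / B1 := by
        rw [hqdef]
        field_simp
        rw [hB1e]; ring
      have h1q' : 1 - q' = b2 / B2 := by
        rw [hq'def]
        field_simp
        rw [hB2e]; ring
      have hq'le : q' ≤ 1 := by
        rw [hq'def, div_le_one hB2, hB2e]
        nlinarith
      -- packaged third coupling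
      obtain ⟨μ₃, hμ₃nn, hμ₃sup, hμ₃row, hμ₃col⟩ :
        ∃ μ₃ : Finset (Fin n) × Finset (Fin n) → ℝ,
          (∀ c, 0 ≤ μ₃ c) ∧
          (∀ c, μ₃ c ≠ 0 → c.1 ⊂ c.2 ∧ c.1.card = k0 + 1 ∧ c.2.card = k0 + 2 ∧ c.2 ⊆ A) ∧
          (∀ s, (1 - q') * ∑ s' : Finset (Fin n), μ₃ (s, s')
              = (1 - q') * (Wf w A (k0 + 1) s / b1)) ∧
          (∀ s', (1 - q') * ∑ s : Finset (Fin n), μ₃ (s, s')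
              = Wf w A (k0 + 2) s' / B2) := by
        by_cases h3 : k0 + 1 < A.card
        · obtain ⟨μ₃, h1, h2, h3r, h3c⟩ := IH (k0 + 1) h3
          refine ⟨μ₃, h1, h2, fun s => by rw [h3r s], fun s' => ?_⟩
          rw [h3c s', h1q']
          have hb2 : 0 < b2 := E_pos hw h3
          rw [show E w A (k0 + 1 + 1) = b2 from rfl]
          field_simp
        · have hq'1 : q' = 1 := by
            rw [hq'def, hB2e]
            have hz : b2 = 0 := E_eq_zero (by omega)
            rw [hz, zero_add, div_self (by positivity)]
          refine ⟨0, fun c => le_refl 0, fun c hc => absurd rfl hc, ?_, ?_⟩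
          · intro s; rw [hq'1]; simp
          · intro s'
            rw [hq'1, Wf_eq_zero_of_card_lt (by omega) s', zero_div]
            simp
      -- the coupling
      set X : Finset (Fin n) → ℝ := fun s => Wf w A (k0 + 1) s / b1 with hXdef
      have hXnn : ∀ s, 0 ≤ X s := fun s => div_nonneg (Wf_nonneg hw _ _ _) hb1.le
      have hq'qnn : 0 ≤ q' - q := sub_nonneg.2 hqq'
      have h1q'nn : 0 ≤ 1 - q' := sub_nonneg.2 hq'le
      have hμ₁notmem : ∀ c : Finset (Fin n) × Finset (Fin n),
          (a ∈ c.1 ∨ a ∈ c.2) → μ₁ c = 0 := by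
        intro c hc
        by_contra hne
        obtain ⟨hss, _, _, hsub⟩ := hμ₁sup c hne
        rcases hc with h | h
        · exact ha (hsub (hss.subset h))
        · exact ha (hsub h)
      have hμ₃notmem : ∀ c : Finset (Fin n) × Finset (Fin n),
          (a ∈ c.1 ∨ a ∈ c.2) → μ₃ c = 0 := by
        intro c hc
        by_contra hne
        obtain ⟨hss, _, _, hsub⟩ := hμ₃sup c hne
        rcases hc with h | h
        · exact ha (hsub (hss.subset h))
        · exact ha (hsub h)
      refine ⟨fun c =>
        (if a ∈ c.1 ∧ a ∈ c.2 then q * μ₁ (c.1.erase a, c.2.erase a) else 0) +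
        ((if a ∉ c.1 ∧ c.2 = insert a c.1 then (q' - q) * X c.1 else 0) +
         (if a ∉ c.1 ∧ a ∉ c.2 then (1 - q') * μ₃ c else 0)), ?_, ?_, ?_, ?_⟩
      · -- nonneg
        intro c
        refine add_nonneg ?_ (add_nonneg ?_ ?_)
        · split
          · exact mul_nonneg hq0 (hμ₁nn _)
          · exact le_refl 0
        · split
          · exact mul_nonneg hq'qnn (hXnn _)
          · exact le_refl 0
        · split
          · exact mul_nonneg h1q'nn (hμ₃nn _)
          · exact le_refl 0
      · -- support
        rintro ⟨s, s'⟩ hc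
        simp only at hc
        show s ⊂ s' ∧ s.card = k0 + 1 ∧ s'.card = k0 + 1 + 1 ∧ s' ⊆ insert a A
        by_cases h1 : a ∈ s
        · have hc2 : ¬(a ∉ s ∧ s' = insert a s) := fun h => h.1 h1
          have hc3 : ¬(a ∉ s ∧ a ∉ s') := fun h => h.1 h1
          rw [if_neg hc2, if_neg hc3, add_zero, add_zero] at hc
          rw [ite_ne_right_iff] at hc
          obtain ⟨h, hcv⟩ := hc
          ·
            have hμne : μ₁ (s.erase a, s'.erase a) ≠ 0 := by
              intro hz; rw [hz, mul_zero] at hcv; exact hcv rfl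
            obtain ⟨hss, hcard1, hcard2, hsub⟩ := hμ₁sup _ hμne
            simp only at hss hcard1 hcard2 hsub
            have has' : a ∈ s' := h.2
            have hs1 : s.card = k0 + 1 := by
              have := Finset.card_erase_of_mem h1
              rw [hcard1] at this
              have h1' : 1 ≤ s.card := Finset.card_pos.2 ⟨a, h1⟩
              omega
            have hs2 : s'.card = k0 + 2 := by
              have := Finset.card_erase_of_mem has'
              rw [hcard2] at this
              have h1' : 1 ≤ s'.card := Finset.card_pos.2 ⟨a, has'⟩
              omega
            refine ⟨⟨?_, ?_⟩, hs1, hs2, ?_⟩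
            · intro x hx
              by_cases hxa : x = a
              · exact hxa ▸ has'
              · exact Finset.mem_of_mem_erase
                  (hss.subset (Finset.mem_erase.2 ⟨hxa, hx⟩))
            · intro hsub'
              exact absurd (Finset.card_le_card hsub') (by omega)
            · intro x hx
              by_cases hxa : x = a
              · exact hxa ▸ Finset.mem_insert_self a A
              · exact Finset.mem_insert_of_mem
                  (hsub (Finset.mem_erase.2 ⟨hxa, hx⟩))
        · by_cases h2 : a ∈ s'
          · have hc1 : ¬(a ∈ s ∧ a ∈ s') := fun h => h1 h.1
            have hc3 : ¬(a ∉ s ∧ a ∉ s') := fun h => h.2 h2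
            rw [if_neg hc1, if_neg hc3, zero_add, add_zero] at hc
            rw [ite_ne_right_iff] at hc
            obtain ⟨h, hcv⟩ := hc
            ·
              have hXne : X s ≠ 0 := by
                intro hz; rw [hz, mul_zero] at hcv; exact hcv rfl
              have hWne : Wf w A (k0 + 1) s ≠ 0 := by
                intro hz
                apply hXne
                rw [hXdef]; simp only; rw [hz, zero_div]
              obtain ⟨hcard1, hsub1⟩ := Wf_ne_zero hWne
              refine ⟨?_, hcard1, ?_, ?_⟩
              · rw [h.2]; exact Finset.ssubset_insert h1
              · rw [h.2, Finset.card_insert_of_notMem h1, hcard1]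
              · rw [h.2]
                exact Finset.insert_subset_insert a hsub1
          · have hc1 : ¬(a ∈ s ∧ a ∈ s') := fun h => h1 h.1
            have hc2 : ¬(a ∉ s ∧ s' = insert a s) := by
              rintro ⟨_, rfl⟩
              exact h2 (Finset.mem_insert_self a s)
            rw [if_neg hc1, if_neg hc2, zero_add, zero_add] at hc
            rw [ite_ne_right_iff] at hc
            obtain ⟨h, hcv⟩ := hc
            ·
              have hμne : μ₃ (s, s') ≠ 0 := by
                intro hz; rw [hz, mul_zero] at hcv; exact hcv rfl
              obtain ⟨hss, hcard1, hcard2, hsub⟩ := hμ₃sup _ hμne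
              exact ⟨hss, hcard1, hcard2, hsub.trans (Finset.subset_insert a A)⟩
      · -- row marginal
        intro s
        rw [Finset.sum_add_distrib, Finset.sum_add_distrib]
        by_cases h1 : a ∈ s
        · have e2 : (∑ s' : Finset (Fin n),
              if a ∉ s ∧ s' = insert a s then (q' - q) * X s else 0) = 0 :=
            Finset.sum_eq_zero fun s' _ => if_neg (fun h => h.1 h1)
          have e3 : (∑ s' : Finset (Fin n),
              if a ∉ s ∧ a ∉ s' then (1 - q') * μ₃ (s, s') else 0) = 0 :=
            Finset.sum_eq_zero fun s' _ => if_neg (fun h => h.1 h1)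
          rw [e2, e3, add_zero, add_zero]
          have e1 : (∑ s' : Finset (Fin n),
              if a ∈ s ∧ a ∈ s' then q * μ₁ (s.erase a, s'.erase a) else 0)
              = ∑ t' : Finset (Fin n), q * μ₁ (s.erase a, t') := by
            rw [← sum_ite_erase a (fun t' => q * μ₁ (s.erase a, t'))
              (fun t ht => by show q * μ₁ (s.erase a, t) = 0; rw [hμ₁notmem _ (Or.inr ht), mul_zero])]
            apply Finset.sum_congr rfl
            intro s' _
            simp only [h1, true_and]
          rw [e1, ← Finset.mul_sum, hμ₁row (s.erase a), Wf_insert_mem ha h1, hqdef]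
          field_simp
        · have e1 : (∑ s' : Finset (Fin n),
              if a ∈ s ∧ a ∈ s' then q * μ₁ (s.erase a, s'.erase a) else 0) = 0 :=
            Finset.sum_eq_zero fun s' _ => if_neg (fun h => h1 h.1)
          have e2 : (∑ s' : Finset (Fin n),
              if a ∉ s ∧ s' = insert a s then (q' - q) * X s else 0)
              = (q' - q) * X s := by
            simp only [h1, not_false_iff, true_and]
            rw [Finset.sum_ite_eq' Finset.univ (insert a s) (fun _ => (q' - q) * X s)]
            simp
          have e3 : (∑ s' : Finset (Fin n),
              if a ∉ s ∧ a ∉ s' then (1 - q') * μ₃ (s, s') else 0)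
              = (1 - q') * (Wf w A (k0 + 1) s / b1) := by
            rw [← hμ₃row s, Finset.mul_sum]
            apply Finset.sum_congr rfl
            intro s' _
            by_cases h2 : a ∈ s'
            · rw [if_neg (fun h => h.2 h2), hμ₃notmem (s, s') (Or.inr h2), mul_zero]
            · rw [if_pos ⟨h1, h2⟩]
          rw [e1, e2, e3, zero_add, Wf_insert_not_mem h1]
          have : (q' - q) * X s + (1 - q') * (Wf w A (k0 + 1) s / b1)
              = (1 - q) * (Wf w A (k0 + 1) s / b1) := by
            rw [hXdef]; ring
          rw [this, h1q]
          field_simp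
      · -- column marginal
        intro s'
        rw [Finset.sum_add_distrib, Finset.sum_add_distrib]
        by_cases h2 : a ∈ s'
        · have e3 : (∑ s : Finset (Fin n),
              if a ∉ s ∧ a ∉ s' then (1 - q') * μ₃ (s, s') else 0) = 0 :=
            Finset.sum_eq_zero fun s _ => if_neg (fun h => h.2 h2)
          have e1 : (∑ s : Finset (Fin n),
              if a ∈ s ∧ a ∈ s' then q * μ₁ (s.erase a, s'.erase a) else 0)
              = ∑ t : Finset (Fin n), q * μ₁ (t, s'.erase a) := by
            rw [← sum_ite_erase a (fun t => q * μ₁ (t, s'.erase a))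
              (fun t ht => by show q * μ₁ (t, s'.erase a) = 0; rw [hμ₁notmem _ (Or.inl ht), mul_zero])]
            apply Finset.sum_congr rfl
            intro s _
            simp only [h2, and_true]
          have e2 : (∑ s : Finset (Fin n),
              if a ∉ s ∧ s' = insert a s then (q' - q) * X s else 0)
              = (q' - q) * X (s'.erase a) := by
            have : ∀ s : Finset (Fin n),
                (if a ∉ s ∧ s' = insert a s then (q' - q) * X s else 0)
                = (if s = s'.erase a then (q' - q) * X s else 0) := by
              intro s
              by_cases hcnd : s = s'.erase a
              · rw [if_pos ((cond_iff h2).2 hcnd), if_pos hcnd]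
              · rw [if_neg (fun h => hcnd ((cond_iff h2).1 h)), if_neg hcnd]
            rw [Finset.sum_congr rfl (fun s _ => this s)]
            rw [Finset.sum_ite_eq' Finset.univ (s'.erase a)
              (fun s => (q' - q) * X s)]
            simp
          rw [e1, e2, e3, add_zero, ← Finset.mul_sum, hμ₁col (s'.erase a), Wf_insert_mem ha h2]
          rw [hXdef]
          simp only
          rw [hqdef, hq'def]
          field_simp
          ring
        · have e1 : (∑ s : Finset (Fin n),
              if a ∈ s ∧ a ∈ s' then q * μ₁ (s.erase a, s'.erase a) else 0) = 0 :=
            Finset.sum_eq_zero fun s _ => if_neg (fun h => h2 h.2)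
          have e2 : (∑ s : Finset (Fin n),
              if a ∉ s ∧ s' = insert a s then (q' - q) * X s else 0) = 0 :=
            Finset.sum_eq_zero fun s _ => if_neg
              (by rintro ⟨_, rfl⟩; exact h2 (Finset.mem_insert_self a s))
          have e3 : (∑ s : Finset (Fin n),
              if a ∉ s ∧ a ∉ s' then (1 - q') * μ₃ (s, s') else 0)
              = Wf w A (k0 + 2) s' / B2 := by
            rw [← hμ₃col s', Finset.mul_sum]
            apply Finset.sum_congr rfl
            intro s _
            by_cases h1 : a ∈ s
            · rw [if_neg (fun h => h.1 h1), hμ₃notmem (s, s') (Or.inl h1), mul_zero]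
            · rw [if_pos ⟨h1, h2⟩]
          rw [e1, e2, e3, zero_add, zero_add, Wf_insert_not_mem h2]

end CouplingAux

open CouplingAux in
lemma condWeight_eq {n : ℕ} (p : Fin n → ℝ) (hp : ∀ j, 0 < p j ∧ p j < 1) (m : ℕ)
    (s : Finset (Fin n)) :
    condWeight p m s = Wf (fun j => p j / (1 - p j)) Finset.univ m s /
      E (fun j => p j / (1 - p j)) Finset.univ m := by
  set w : Fin n → ℝ := fun j => p j / (1 - p j) with hwdef
  have h1p : ∀ j, (0:ℝ) < 1 - p j := fun j => by linarith [(hp j).2]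
  set C : ℝ := ∏ j, (1 - p j) with hCdef
  have hC : 0 < C := Finset.prod_pos fun j _ => h1p j
  have hPW : ∀ t : Finset (Fin n), prodWeight p t = C * ∏ j ∈ t, w j := by
    intro t
    unfold prodWeight
    rw [hCdef, ← Finset.prod_mul_prod_compl t (fun j => 1 - p j)]
    have : ∏ j ∈ t, p j = (∏ j ∈ t, (1 - p j)) * ∏ j ∈ t, w j := by
      rw [← Finset.prod_mul_distrib]
      apply Finset.prod_congr rfl
      intro j _
      have hne : (1 : ℝ) - p j ≠ 0 := ne_of_gt (h1p j)
      rw [hwdef]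
      field_simp
    rw [this]
    ring
  have hnum : (if s.card = m then prodWeight p s else 0) = C * Wf w Finset.univ m s := by
    unfold Wf
    simp only [Finset.subset_univ, and_true]
    by_cases h : s.card = m
    · rw [if_pos h, if_pos h, hPW]
    · rw [if_neg h, if_neg h, mul_zero]
  have hden : (∑ u ∈ Finset.univ.filter (fun u : Finset (Fin n) => u.card = m),
      prodWeight p u) = C * E w Finset.univ m := by
    rw [E, Finset.mul_sum]
    apply Finset.sum_congr
    · ext u
      simp [Finset.mem_powersetCard, Finset.subset_univ]
    · intro u _
      exact hPW u
  rw [condWeight, hnum, hden, mul_div_mul_left _ _ (ne_of_gt hC)]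

open CouplingAux in
/-- **One-step coupling.**  For a non-trivial product distribution `P` on `{0,1}^n`
and `ℓ ∈ {0,…,n-1}`, there is a probability distribution on pairs
`(c_ℓ, c_{ℓ+1})` of subsets of `[n]` with `|c_ℓ| = ℓ`, `|c_{ℓ+1}| = ℓ+1` such that
(1) `c_ℓ ⊂ c_{ℓ+1}` almost surely, (2) `c_ℓ ∼ P_ℓ`, (3) `c_{ℓ+1} ∼ P_{ℓ+1}`. -/
theorem exists_coupled_pair (n ℓ : ℕ) (hℓ : ℓ < n) (p : Fin n → ℝ)
    (hp : ∀ j, 0 < p j ∧ p j < 1) :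
    ∃ μ : Finset (Fin n) × Finset (Fin n) → ℝ,
      (∀ c, 0 ≤ μ c) ∧
      (∑ c, μ c = 1) ∧
      (∀ c : Finset (Fin n) × Finset (Fin n), μ c ≠ 0 →
        c.1 ⊂ c.2 ∧ c.1.card = ℓ ∧ c.2.card = ℓ + 1) ∧
      (∀ s : Finset (Fin n), ∑ s' : Finset (Fin n), μ (s, s') = condWeight p ℓ s) ∧
      (∀ s' : Finset (Fin n), ∑ s : Finset (Fin n), μ (s, s') = condWeight p (ℓ + 1) s') := by
  set w : Fin n → ℝ := fun j => p j / (1 - p j) with hwdef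
  have hw : ∀ j, 0 < w j := fun j => div_pos (hp j).1 (by linarith [(hp j).2])
  have hcard : (Finset.univ : Finset (Fin n)).card = n := by simp
  obtain ⟨μ, hnn, hsup, hrow, hcol⟩ :=
    exists_coupling hw Finset.univ ℓ (by rw [hcard]; exact hℓ)
  refine ⟨μ, hnn, ?_, fun c hc => ⟨(hsup c hc).1, (hsup c hc).2.1, (hsup c hc).2.2.1⟩,
    ?_, ?_⟩
  · rw [Fintype.sum_prod_type]
    have : ∀ s : Finset (Fin n), ∑ s' : Finset (Fin n), μ (s, s')
        = Wf w Finset.univ ℓ s / E w Finset.univ ℓ := hrow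
    rw [Finset.sum_congr rfl (fun s _ => this s), ← Finset.sum_div, sum_Wf,
      div_self (ne_of_gt (E_pos hw (by rw [hcard]; exact hℓ.le)))]
  · intro s
    rw [hrow s, condWeight_eq p hp ℓ s]
  · intro s'
    rw [hcol s', condWeight_eq p hp (ℓ + 1) s']
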